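/- arXiv:1410.2880 — 2 statements merged into one kernel-verified Lean document; each statement's English description precedes it below -/
import Mathlib

section
/- Fix 0 < u₁ < u₀, let ρ be a cutoff function, and let μ be a Borel measure on ℝ (possibly of infinite total mass) such that ∫_ℝ min(1, u²) μ(du) < ∞, and such that the restriction of μ to [−u₀, u₀] has a density σ (with respect to Lebesgue measure) that is positive and continuously differentiable on [−u₀, u₀] \ {0} and satisfies |σ'(u)| ≤ C₀ |u|⁻¹ σ(u) for all 0 < |u| ≤ u₀. Define χ(u) = −(σ(u)ρ(u))'/σ(u) for 0 < |u| ≤ u₀ and χ(u) = 0 for |u| > u₀. Then χ is square-integrable with respect to μ: ∫_ℝ χ(u)² μ(du) < ∞. -/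
open MeasureTheory

/-- Let `0 < u₁ < u₀`, let `ρ` be a cutoff function, and let `μ` be a Lévy measure
on `ℝ` (i.e. `μ({0}) = 0` and `∫ min(1, u²) μ(du) < ∞`) whose restriction to
`[−u₀, u₀]` has a density `σ` w.r.t. Lebesgue measure which is positive and
continuously differentiable on `[−u₀, u₀] \ {0}` and satisfies
`|σ'(u)| ≤ C₀ |u|⁻¹ σ(u)` there. Then `χ(u) = −(σ(u)ρ(u))'/σ(u)` (for
`0 < |u| ≤ u₀`, extended by `0` for `|u| > u₀`) is square-integrable w.r.t. `μ`. -/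
theorem stmt_9 (u₁ u₀ C₀ : ℝ) (h1 : 0 < u₁) (h2 : u₁ < u₀) (hC₀ : 0 < C₀)
    (ρ : ℝ → ℝ) (hρnn : ∀ u, 0 ≤ ρ u) (hρ : ContDiff ℝ 2 ρ)
    (hρbd : ∃ M : ℝ, ∀ u : ℝ, |deriv ρ u| ≤ M)
    (hρ1 : ∀ u : ℝ, |u| ≤ u₁ → ρ u = u ^ 2)
    (hρ0 : ∀ u : ℝ, u₀ ≤ |u| → ρ u = 0)
    (μ : Measure ℝ)
    (hμ0 : μ {0} = 0)
    (hμint : ∫⁻ u : ℝ, ENNReal.ofReal (min 1 (u ^ 2)) ∂μ < ⊤)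
    (σ : ℝ → ℝ)
    (hdens : μ.restrict (Set.Icc (-u₀) u₀) =
      (volume.restrict (Set.Icc (-u₀) u₀)).withDensity
        (fun u => ENNReal.ofReal (σ u)))
    (hσpos : ∀ u : ℝ, 0 < |u| → |u| ≤ u₀ → 0 < σ u)
    (hσdiff : ∀ u : ℝ, 0 < |u| → |u| ≤ u₀ → DifferentiableAt ℝ σ u)
    (hσcont : ContinuousOn (deriv σ) {u : ℝ | 0 < |u| ∧ |u| ≤ u₀})
    (hσbd : ∀ u : ℝ, 0 < |u| → |u| ≤ u₀ → |deriv σ u| ≤ C₀ * |u|⁻¹ * σ u)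
    (χ : ℝ → ℝ)
    (hχ : ∀ u : ℝ, 0 < |u| → |u| ≤ u₀ →
      χ u = -(deriv (fun v => σ v * ρ v) u) / σ u)
    (hχ0 : ∀ u : ℝ, u₀ < |u| → χ u = 0) :
    ∫⁻ u : ℝ, ENNReal.ofReal (χ u ^ 2) ∂μ < ⊤ := by
  obtain ⟨M, hM⟩ := hρbd
  have hM0 : 0 ≤ M := le_trans (abs_nonneg _) (hM 0)
  set t : ℝ := min u₁ 1 with ht
  have ht0 : 0 < t := lt_min h1 one_pos
  have ht1 : t ≤ 1 := min_le_right _ _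
  have htu1 : t ≤ u₁ := min_le_left _ _
  -- global bound on ρ
  obtain ⟨B, hB0, hB⟩ : ∃ B, 0 ≤ B ∧ ∀ u, ρ u ≤ B := by
    obtain ⟨B, hB⟩ := (isCompact_Icc (a := -u₀) (b := u₀)).exists_bound_of_continuousOn
      hρ.continuous.continuousOn
    refine ⟨max B 0, le_max_right _ _, fun u => ?_⟩
    by_cases h : |u| ≤ u₀
    · exact le_trans (le_trans (le_abs_self _) (hB u (Set.mem_Icc.mpr (abs_le.mp h))))
        (le_max_left _ _)
    · rw [hρ0 u (le_of_lt (not_le.mp h))]; exact le_max_right _ _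
  -- derivative of ρ near 0
  have hderivρ : ∀ u : ℝ, |u| < u₁ → deriv ρ u = 2 * u := by
    intro u hu
    have hopen : IsOpen {v : ℝ | |v| < u₁} := isOpen_lt continuous_abs continuous_const
    have hev : ρ =ᶠ[nhds u] fun v => v ^ 2 := by
      filter_upwards [hopen.mem_nhds hu] with v hv
      exact hρ1 v (le_of_lt hv)
    rw [hev.deriv_eq]
    simp [deriv_pow]
  -- basic bound on χ
  have hbound : ∀ u : ℝ, 0 < |u| → |u| ≤ u₀ →
      |χ u| ≤ C₀ * |u|⁻¹ * ρ u + |deriv ρ u| := by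
    intro u hu hle
    have hσp := hσpos u hu hle
    have hρd : DifferentiableAt ℝ ρ u := (hρ.differentiable (by norm_num)) u
    rw [hχ u hu hle, deriv_fun_mul (hσdiff u hu hle) hρd, neg_div, abs_neg, abs_div,
      abs_of_pos hσp, div_le_iff₀ hσp]
    have h3 := abs_add_le (deriv σ u * ρ u) (σ u * deriv ρ u)
    rw [abs_mul, abs_mul, abs_of_nonneg (hρnn u), abs_of_pos hσp] at h3
    have h4 := hσbd u hu hle
    have h5 : (0:ℝ) < |u|⁻¹ := inv_pos.mpr hu
    nlinarith [hρnn u, abs_nonneg (deriv ρ u)]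
  set K : ℝ := C₀ * t⁻¹ * B + M with hK
  have hK0 : 0 ≤ K := by positivity
  set A : ℝ := max ((C₀ + 2) ^ 2) (K ^ 2 / t ^ 2) with hA
  have hA0 : 0 ≤ A := le_trans (by positivity) (le_max_left _ _)
  -- pointwise bound
  have key : ∀ u : ℝ, u ≠ 0 → χ u ^ 2 ≤ A * min 1 (u ^ 2) := by
    intro u hu0
    have hu : 0 < |u| := abs_pos.mpr hu0
    by_cases hle : |u| ≤ u₀
    · by_cases hsm : |u| < t
      · -- small case
        have hu1 : |u| < u₁ := lt_of_lt_of_le hsm htu1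
        have hd := hderivρ u hu1
        have hρu : ρ u = u ^ 2 := hρ1 u (le_of_lt hu1)
        have hb := hbound u hu hle
        rw [hρu, hd] at hb
        have hne : |u| ≠ 0 := ne_of_gt hu
        have e1 : C₀ * |u|⁻¹ * u ^ 2 = C₀ * |u| := by
          rw [← sq_abs u, sq, ← mul_assoc, mul_assoc C₀, inv_mul_cancel₀ hne, mul_one]
        have e2 : |2 * u| = 2 * |u| := by rw [abs_mul]; norm_num
        rw [e1, e2] at hb
        have hb2 : |χ u| ≤ (C₀ + 2) * |u| := by linarith
        have hχ2 : χ u ^ 2 ≤ ((C₀ + 2) * |u|) ^ 2 := by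
          rw [← sq_abs (χ u)]
          exact pow_le_pow_left₀ (abs_nonneg _) hb2 2
        have hmin : min 1 (u ^ 2) = u ^ 2 := by
          refine min_eq_right ?_
          have : |u| ≤ 1 := le_of_lt (lt_of_lt_of_le hsm ht1)
          nlinarith [abs_nonneg u, sq_abs u]
        rw [hmin]
        have : ((C₀ + 2) * |u|) ^ 2 = (C₀ + 2) ^ 2 * u ^ 2 := by
          rw [mul_pow, sq_abs]
        rw [this] at hχ2
        exact le_trans hχ2 (mul_le_mul_of_nonneg_right (le_max_left _ _) (by positivity))
      · -- medium case
        push_neg at hsm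
        have hb := hbound u hu hle
        have h6 : |u|⁻¹ ≤ t⁻¹ := inv_anti₀ ht0 hsm
        have hb2 : |χ u| ≤ K := by
          have h7 : C₀ * (|u|⁻¹ * ρ u) ≤ C₀ * (t⁻¹ * B) :=
            mul_le_mul_of_nonneg_left
              (mul_le_mul h6 (hB u) (hρnn u) (le_of_lt (inv_pos.mpr ht0))) hC₀.le
          rw [hK]
          have := hM u
          rw [mul_assoc] at hb ⊢
          linarith
        have hχ2 : χ u ^ 2 ≤ K ^ 2 := by
          rw [← sq_abs (χ u)]
          exact pow_le_pow_left₀ (abs_nonneg _) hb2 2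
        have hmin : t ^ 2 ≤ min 1 (u ^ 2) := by
          refine le_min (by nlinarith) ?_
          nlinarith [sq_abs u, abs_nonneg u]
        have : K ^ 2 / t ^ 2 * (t ^ 2) ≤ A * min 1 (u ^ 2) := by
          have hKA : K ^ 2 / t ^ 2 ≤ A := le_max_right _ _
          have h7 : (0:ℝ) ≤ K ^ 2 / t ^ 2 := by positivity
          calc K ^ 2 / t ^ 2 * t ^ 2 ≤ K ^ 2 / t ^ 2 * min 1 (u ^ 2) :=
                mul_le_mul_of_nonneg_left hmin h7
            _ ≤ A * min 1 (u ^ 2) := by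
                refine mul_le_mul_of_nonneg_right hKA (le_min zero_le_one (sq_nonneg u))
        have e3 : K ^ 2 / t ^ 2 * t ^ 2 = K ^ 2 := by field_simp
        rw [e3] at this
        exact le_trans hχ2 this
    · -- large case
      push_neg at hle
      rw [hχ0 u hle]
      have : (0:ℝ) ≤ A * min 1 (u ^ 2) := by
        exact mul_nonneg hA0 (le_min zero_le_one (sq_nonneg u))
      rw [zero_pow (by norm_num : (2:ℕ) ≠ 0)]
      exact this
  have h0 : ∀ᵐ u ∂μ, u ≠ 0 := by
    rw [ae_iff]
    simp only [ne_eq, not_not, Set.setOf_eq_eq_singleton]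
    exact hμ0
  have hmono : ∫⁻ u, ENNReal.ofReal (χ u ^ 2) ∂μ
      ≤ ∫⁻ u, ENNReal.ofReal A * ENNReal.ofReal (min 1 (u ^ 2)) ∂μ := by
    refine lintegral_mono_ae ?_
    filter_upwards [h0] with u hu
    rw [← ENNReal.ofReal_mul hA0]
    exact ENNReal.ofReal_le_ofReal (key u hu)
  rw [lintegral_const_mul' _ _ ENNReal.ofReal_ne_top] at hmono
  exact lt_of_le_of_lt hmono (ENNReal.mul_lt_top ENNReal.ofReal_lt_top hμint)
end

section
/- Fix 0 < u₁ < u₀, let ρ be a cutoff function, and let σ be a function on [−u₀, u₀] \ {0} that is positive and twice continuously differentiable there and satisfies |σ'(u)| ≤ C₀ |u|⁻¹ σ(u) and |σ''(u)| ≤ C₀ u⁻² σ(u) for all 0 < |u| ≤ u₀, where C₀ > 0 is a constant. Define χ(u) = −(σ(u)ρ(u))'/σ(u) for 0 < |u| ≤ u₀. Then χ is continuously differentiable on {u : 0 < |u| ≤ u₁} and there exists a constant C, depending only on C₀, such that |χ'(u)| ≤ C for all 0 < |u| ≤ u₁. -/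
/-- Let `0 < u₁ < u₀`, let `ρ` be a cutoff function, and let `σ` be positive and
twice continuously differentiable on `[−u₀, u₀] \ {0}` with
`|σ'(u)| ≤ C₀ |u|⁻¹ σ(u)` and `|σ''(u)| ≤ C₀ u⁻² σ(u)` there. Then
`χ(u) = −(σ(u)ρ(u))'/σ(u)` is continuously differentiable on `{u : 0 < |u| ≤ u₁}`
and there is a constant `C` (depending only on `C₀`) with `|χ'(u)| ≤ C` for all
`0 < |u| ≤ u₁`. -/
theorem stmt_11 (u₁ u₀ C₀ : ℝ) (h1 : 0 < u₁) (h2 : u₁ < u₀) (hC₀ : 0 < C₀)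
    (ρ : ℝ → ℝ) (hρnn : ∀ u, 0 ≤ ρ u) (hρ : ContDiff ℝ 2 ρ)
    (hρbd : ∃ M : ℝ, ∀ u : ℝ, |deriv ρ u| ≤ M)
    (hρ1 : ∀ u : ℝ, |u| ≤ u₁ → ρ u = u ^ 2)
    (hρ0 : ∀ u : ℝ, u₀ ≤ |u| → ρ u = 0)
    (σ : ℝ → ℝ)
    (hσpos : ∀ u : ℝ, 0 < |u| → |u| ≤ u₀ → 0 < σ u)
    (hσdiff : ∀ u : ℝ, 0 < |u| → |u| ≤ u₀ → DifferentiableAt ℝ σ u)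
    (hσdiff2 : ∀ u : ℝ, 0 < |u| → |u| ≤ u₀ → DifferentiableAt ℝ (deriv σ) u)
    (hσcont2 : ContinuousOn (deriv (deriv σ)) {u : ℝ | 0 < |u| ∧ |u| ≤ u₀})
    (hσbd : ∀ u : ℝ, 0 < |u| → |u| ≤ u₀ → |deriv σ u| ≤ C₀ * |u|⁻¹ * σ u)
    (hσbd2 : ∀ u : ℝ, 0 < |u| → |u| ≤ u₀ →
      |deriv (deriv σ) u| ≤ C₀ * (u ^ 2)⁻¹ * σ u)
    (χ : ℝ → ℝ)
    (hχ : ∀ u : ℝ, 0 < |u| → |u| ≤ u₀ →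
      χ u = -(deriv (fun v => σ v * ρ v) u) / σ u) :
    (∀ u : ℝ, 0 < |u| → |u| ≤ u₁ → DifferentiableAt ℝ χ u) ∧
    ContinuousOn (deriv χ) {u : ℝ | 0 < |u| ∧ |u| ≤ u₁} ∧
    ∃ C : ℝ, ∀ u : ℝ, 0 < |u| → |u| ≤ u₁ → |deriv χ u| ≤ C := by
  -- regularity of ρ
  have hρdiff : Differentiable ℝ ρ := hρ.differentiable two_ne_zero
  have hρ2' : ContDiff ℝ (1 + 1) ρ := by norm_num; exact hρ
  have hρ1' : ContDiff ℝ 1 (deriv ρ) := (contDiff_succ_iff_deriv.mp hρ2').2.2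
  have hρdcont : Continuous (deriv ρ) := hρ1'.continuous
  have hρddiff : Differentiable ℝ (deriv ρ) := hρ1'.differentiable one_ne_zero
  have hρddcont : Continuous (deriv (deriv ρ)) :=
    (contDiff_succ_iff_deriv.mp (by norm_num; exact hρ1' : ContDiff ℝ (0+1) (deriv ρ))).2.2.continuous
  -- deriv ρ = 2v on the open ball
  have hball : ∀ v : ℝ, |v| < u₁ → Metric.ball (0:ℝ) u₁ ∈ nhds v := by
    intro v hv
    exact Metric.isOpen_ball.mem_nhds (by simpa [Metric.mem_ball, Real.dist_eq] using hv)
  have hd1 : ∀ v : ℝ, |v| < u₁ → deriv ρ v = 2 * v := by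
    intro v hv
    have heq : ρ =ᶠ[nhds v] fun w => w ^ 2 := by
      filter_upwards [hball v hv] with w hw
      exact hρ1 w (le_of_lt (by simpa [Metric.mem_ball, Real.dist_eq] using hw))
    rw [heq.deriv_eq]
    simp [deriv_pow]
  have hd1' : ∀ v : ℝ, |v| ≤ u₁ → deriv ρ v = 2 * v := by
    have hEq : Set.EqOn (deriv ρ) (fun v => 2 * v)
        (closure (Metric.ball (0:ℝ) u₁)) := by
      apply Set.EqOn.closure (fun v hv => hd1 v (by simpa [Metric.mem_ball, Real.dist_eq] using hv))
        hρdcont (by continuity)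
    intro v hv
    have : v ∈ closure (Metric.ball (0:ℝ) u₁) := by
      rw [closure_ball (0:ℝ) h1.ne']
      simpa [Metric.mem_closedBall, Real.dist_eq] using hv
    exact hEq this
  have hd2 : ∀ v : ℝ, |v| < u₁ → deriv (deriv ρ) v = 2 := by
    intro v hv
    have heq : deriv ρ =ᶠ[nhds v] fun w => 2 * w := by
      filter_upwards [hball v hv] with w hw
      exact hd1 w (by simpa [Metric.mem_ball, Real.dist_eq] using hw)
    rw [heq.deriv_eq]
    have h2w : HasDerivAt (fun w : ℝ => 2 * w) 2 v := by
      simpa using (hasDerivAt_id v).const_mul (2:ℝ)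
    exact h2w.deriv
  have hd2' : ∀ v : ℝ, |v| ≤ u₁ → deriv (deriv ρ) v = 2 := by
    have hEq : Set.EqOn (deriv (deriv ρ)) (fun _ => 2)
        (closure (Metric.ball (0:ℝ) u₁)) := by
      apply Set.EqOn.closure (fun v hv => hd2 v (by simpa [Metric.mem_ball, Real.dist_eq] using hv))
        hρddcont continuous_const
    intro v hv
    have : v ∈ closure (Metric.ball (0:ℝ) u₁) := by
      rw [closure_ball (0:ℝ) h1.ne']
      simpa [Metric.mem_closedBall, Real.dist_eq] using hv
    exact hEq this
  -- the open set U
  set U : Set ℝ := {v : ℝ | v ≠ 0 ∧ |v| < u₀} with hUdef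
  have hUopen : IsOpen U := by
    have : U = {v : ℝ | v ≠ 0} ∩ (abs ⁻¹' Set.Iio u₀) := rfl
    rw [this]
    exact (isOpen_ne).inter (isOpen_Iio.preimage continuous_abs)
  have hUeq : ∀ v ∈ U, χ v = -(deriv σ v * ρ v + σ v * deriv ρ v) / σ v := by
    intro v hv
    have h0 : 0 < |v| := abs_pos.mpr hv.1
    rw [hχ v h0 hv.2.le, deriv_fun_mul (hσdiff v h0 hv.2.le) (hρdiff v)]
  -- explicit derivative function
  set G : ℝ → ℝ := fun v =>
    ((-(deriv (deriv σ) v * v ^ 2 + deriv σ v * (2 * v) +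
        (deriv σ v * (2 * v) + σ v * 2))) * σ v -
      (-(deriv σ v * v ^ 2 + σ v * (2 * v))) * deriv σ v) / (σ v) ^ 2 with hGdef
  have key : ∀ u : ℝ, 0 < |u| → |u| ≤ u₁ → HasDerivAt χ (G u) u := by
    intro u hu0 hu1
    have huu0 : |u| ≤ u₀ := hu1.trans h2.le
    have hmemU : u ∈ U := ⟨abs_pos.mp hu0, lt_of_le_of_lt hu1 h2⟩
    have hUnhds : U ∈ nhds u := hUopen.mem_nhds hmemU
    have ha : HasDerivAt σ (deriv σ u) u := (hσdiff u hu0 huu0).hasDerivAt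
    have ha' : HasDerivAt (deriv σ) (deriv (deriv σ) u) u :=
      (hσdiff2 u hu0 huu0).hasDerivAt
    have hr : HasDerivAt ρ (2 * u) u := by
      have := (hρdiff u).hasDerivAt
      rwa [hd1' u hu1] at this
    have hr' : HasDerivAt (deriv ρ) 2 u := by
      have := (hρddiff u).hasDerivAt
      rwa [hd2' u hu1] at this
    have hN : HasDerivAt (fun v => deriv σ v * ρ v + σ v * deriv ρ v)
        (deriv (deriv σ) u * ρ u + deriv σ u * (2 * u) +
          (deriv σ u * deriv ρ u + σ u * 2)) u :=
      (ha'.mul (hρdiff u).hasDerivAt).add (ha.mul (hρddiff u).hasDerivAt) |>.congr_deriv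
        (by rw [hd1' u hu1, hd2' u hu1])
    have hσne : σ u ≠ 0 := (hσpos u hu0 huu0).ne'
    have hF : HasDerivAt (fun v => -(deriv σ v * ρ v + σ v * deriv ρ v) / σ v)
        (((-(deriv (deriv σ) u * ρ u + deriv σ u * (2 * u) +
          (deriv σ u * deriv ρ u + σ u * 2))) * σ u -
          (-(deriv σ u * ρ u + σ u * deriv ρ u)) * deriv σ u) / (σ u) ^ 2) u :=
      hN.neg.div ha hσne
    have hGu : G u = ((-(deriv (deriv σ) u * ρ u + deriv σ u * (2 * u) +
          (deriv σ u * deriv ρ u + σ u * 2))) * σ u -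
          (-(deriv σ u * ρ u + σ u * deriv ρ u)) * deriv σ u) / (σ u) ^ 2 := by
      rw [hGdef]
      simp only
      rw [hρ1 u hu1, hd1' u hu1]
    rw [hGu]
    apply hF.congr_of_eventuallyEq
    filter_upwards [hUnhds] with v hv
    exact hUeq v hv
  have hsub : {u : ℝ | 0 < |u| ∧ |u| ≤ u₁} ⊆ {u : ℝ | 0 < |u| ∧ |u| ≤ u₀} :=
    fun u hu => ⟨hu.1, hu.2.trans h2.le⟩
  have hderiv : ∀ u : ℝ, 0 < |u| → |u| ≤ u₁ → deriv χ u = G u :=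
    fun u h h' => (key u h h').deriv
  refine ⟨fun u h h' => (key u h h').differentiableAt, ?_, ?_⟩
  · -- continuity of deriv χ
    apply ContinuousOn.congr (f := G)
    · -- G continuous on the set
      have hcσ : ContinuousOn σ {u : ℝ | 0 < |u| ∧ |u| ≤ u₁} := fun u hu =>
        ((hσdiff u hu.1 (hu.2.trans h2.le)).continuousAt).continuousWithinAt
      have hcσ' : ContinuousOn (deriv σ) {u : ℝ | 0 < |u| ∧ |u| ≤ u₁} := fun u hu =>
        ((hσdiff2 u hu.1 (hu.2.trans h2.le)).continuousAt).continuousWithinAt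
      have hcσ'' : ContinuousOn (deriv (deriv σ)) {u : ℝ | 0 < |u| ∧ |u| ≤ u₁} :=
        hσcont2.mono hsub
      apply ContinuousOn.div
      · fun_prop
      · fun_prop
      · intro u hu
        exact pow_ne_zero 2 (hσpos u hu.1 (hu.2.trans h2.le)).ne'
    · intro u hu
      exact hderiv u hu.1 hu.2
  · -- bound
    refine ⟨C₀ ^ 2 + 3 * C₀ + 2, fun u hu0 hu1 => ?_⟩
    rw [hderiv u hu0 hu1]
    have huu0 : |u| ≤ u₀ := hu1.trans h2.le
    have hapos : 0 < σ u := hσpos u hu0 huu0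
    set a := σ u
    set b := deriv σ u
    set c := deriv (deriv σ) u
    have hane : a ≠ 0 := hapos.ne'
    have hGform : G u = (b * u / a) ^ 2 - 2 * (b * u / a) - c * u ^ 2 / a - 2 := by
      rw [hGdef]
      have hσu : σ u ≠ 0 := hane
      simp only [a, b, c]
      field_simp
      ring
    have ht : |b * u / a| ≤ C₀ := by
      have h1' : |b| * |u| ≤ C₀ * a := by
        have := hσbd u hu0 huu0
        calc |b| * |u| ≤ (C₀ * |u|⁻¹ * a) * |u| :=
              mul_le_mul_of_nonneg_right this (abs_nonneg u)
          _ = C₀ * a := by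
              field_simp
      rw [abs_div, abs_mul, abs_of_pos hapos]
      rw [div_le_iff₀ hapos]
      linarith
    have hs : |c * u ^ 2 / a| ≤ C₀ := by
      have h1' : |c| * u ^ 2 ≤ C₀ * a := by
        have := hσbd2 u hu0 huu0
        have hu2 : (0:ℝ) < u ^ 2 := by rw [← sq_abs]; exact pow_pos hu0 2
        calc |c| * u ^ 2 ≤ (C₀ * (u ^ 2)⁻¹ * a) * u ^ 2 :=
              mul_le_mul_of_nonneg_right this (le_of_lt hu2)
          _ = C₀ * a := by
              field_simp
              exact div_self (abs_pos.mp hu0)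
      rw [abs_div, abs_mul, abs_of_pos hapos, abs_pow, sq_abs]
      rw [div_le_iff₀ hapos]
      linarith
    rw [hGform]
    calc |(b * u / a) ^ 2 - 2 * (b * u / a) - c * u ^ 2 / a - 2|
        ≤ |b * u / a| ^ 2 + 2 * |b * u / a| + |c * u ^ 2 / a| + 2 := by
          have := abs_sub (((b * u / a) ^ 2 - 2 * (b * u / a)) - c * u ^ 2 / a) 2
          calc |(b * u / a) ^ 2 - 2 * (b * u / a) - c * u ^ 2 / a - 2|
              ≤ |(b * u / a) ^ 2 - 2 * (b * u / a) - c * u ^ 2 / a| + |(2:ℝ)| :=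
                abs_sub _ _
            _ ≤ (|(b * u / a) ^ 2 - 2 * (b * u / a)| + |c * u ^ 2 / a|) + 2 := by
                have := abs_sub ((b * u / a) ^ 2 - 2 * (b * u / a)) (c * u ^ 2 / a)
                simp at this ⊢
                linarith [this]
            _ ≤ (|(b * u / a) ^ 2| + |2 * (b * u / a)| + |c * u ^ 2 / a|) + 2 := by
                linarith [abs_sub ((b * u / a) ^ 2) (2 * (b * u / a))]
            _ = |b * u / a| ^ 2 + 2 * |b * u / a| + |c * u ^ 2 / a| + 2 := by
                rw [abs_pow, abs_mul]
                norm_num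
      _ ≤ C₀ ^ 2 + 2 * C₀ + C₀ + 2 := by
          have h2' : |b * u / a| ^ 2 ≤ C₀ ^ 2 :=
            pow_le_pow_left₀ (abs_nonneg _) ht 2
          linarith
      _ = C₀ ^ 2 + 3 * C₀ + 2 := by ring
end
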